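/- Assume p01 ≤ p11 and β ∈ [0,1]. Let g : [0,1]^n → ℝ be affine in each coordinate and satisfy both: (A) 1 + g(ω_2,…,ω_n,ω_1) ≥ g(ω_1,…,ω_n) for all 0 ≤ ω_1 ≤ ⋯ ≤ ω_n ≤ 1, and (B) g(ω_1,…,ω_j, y, x, ω_{j+3},…,ω_n) ≥ g(ω_1,…,ω_j, x, y, ω_{j+3},…,ω_n) for all 0 ≤ ω_1 ≤ ⋯ ≤ ω_n ≤ 1, all 0 ≤ j ≤ n−2, and all x ≥ y in [0,1]. Define f : [0,1]^n → ℝ by f(ω_1,…,ω_n) = Σ_{i=n−k+1}^n ω_i + β · Σ_{l ∈ {0,1}^k} q(l; (ω_{n−k+1},…,ω_n)) · g(v_l), where v_l consists of (k−|l|) copies of p01, then τ(ω_1),…,τ(ω_{n−k}), then |l| copies of p11. Then f satisfies (A): 1 + f(ω_2,…,ω_n,ω_1) ≥ f(ω_1,…,ω_n) for all 0 ≤ ω_1 ≤ ⋯ ≤ ω_n ≤ 1. -/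

import Mathlib

open Finset

noncomputable section

/-- The one-step belief update for an unobserved channel. -/
def tauF (p01 p11 : ℝ) (w : ℝ) : ℝ := w * p11 + (1 - w) * p01

/-- The set of admissible actions: subsets of `Fin n` of cardinality `k`. -/
def actions (n k : ℕ) : Finset (Finset (Fin n)) :=
  (Finset.univ : Finset (Fin n)).powersetCard k

lemma actions_nonempty {n k : ℕ} (hk : k ≤ n) : (actions n k).Nonempty := by
  rw [actions, Finset.powersetCard_nonempty, Finset.card_univ, Fintype.card_fin]
  exact hk

/-- Number of `true` entries in a `{0,1}^k` realization. -/
def countTrue {k : ℕ} (l : Fin k → Bool) : ℕ :=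
  (Finset.univ.filter fun i => l i = true).card

/-- `q(l; u) = ∏ u_i^{l_i} (1-u_i)^{1-l_i}`. -/
def qProb {k : ℕ} (u : Fin k → ℝ) (l : Fin k → Bool) : ℝ :=
  ∏ i : Fin k, if l i then u i else 1 - u i

/-- The top `k` coordinates `(ω_{n-k+1}, …, ω_n)` of a length-`n` vector. -/
def topCoords {n k : ℕ} (hk : k ≤ n) (ω : Fin n → ℝ) : Fin k → ℝ :=
  fun i => ω ⟨n - k + i.val, by omega⟩

/-- The vector `v_l`: `k - m` copies of `p01`, then `τ(ω_1),…,τ(ω_{n-k})`,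
then `m` copies of `p11`, where `m` is the number of ones in `l`. -/
def vl {n : ℕ} (k : ℕ) (p01 p11 : ℝ) (ω : Fin n → ℝ) (m : ℕ) : Fin n → ℝ :=
  fun j =>
    if j.val < k - m then p01
    else if j.val < n - m then tauF p01 p11 (ω ⟨j.val - (k - m), by omega⟩)
    else p11

/-- The greedy-policy value functions `W`, indexed by the number of remaining
steps (`r = 0` corresponds to the terminal time `T`). -/
def Wval (n k : ℕ) (hk : k ≤ n) (p01 p11 β : ℝ) : ℕ → (Fin n → ℝ) → ℝ
  | 0, ω => ∑ i : Fin n, if n - k ≤ i.val then ω i else 0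
  | r + 1, ω =>
      (∑ i : Fin n, if n - k ≤ i.val then ω i else 0) +
        β * ∑ l : Fin k → Bool,
          qProb (topCoords hk ω) l *
            Wval n k hk p01 p11 β r (vl k p01 p11 ω (countTrue l))

/-- The updated information state `ω^{a,s}`. -/
def nextState {n : ℕ} (p01 p11 : ℝ) (ω : Fin n → ℝ) (a : Finset (Fin n))
    (s : {i // i ∈ a} → Bool) : Fin n → ℝ :=
  fun j => if h : j ∈ a then (if s ⟨j, h⟩ then p11 else p01) else tauF p01 p11 (ω j)

/-- The probability of the realization `s` of the selected channels `a`. -/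
def obsProb {n : ℕ} (ω : Fin n → ℝ) (a : Finset (Fin n))
    (s : {i // i ∈ a} → Bool) : ℝ :=
  ∏ i : {i // i ∈ a}, if s i then ω i.val else 1 - ω i.val

/-- The optimal value functions `V`, indexed by the number of remaining steps. -/
def Vval (n k : ℕ) (hk : k ≤ n) (p01 p11 β : ℝ) : ℕ → (Fin n → ℝ) → ℝ
  | 0, ω => (actions n k).sup' (actions_nonempty hk) fun a => ∑ i ∈ a, ω i
  | r + 1, ω =>
      (actions n k).sup' (actions_nonempty hk) fun a =>
        (∑ i ∈ a, ω i) +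
          β * ∑ s : {i // i ∈ a} → Bool,
            obsProb ω a s * Vval n k hk p01 p11 β r (nextState p01 p11 ω a s)

/-- `Q_t(ω, a)`: the value of taking action `a` now and acting optimally
afterwards, indexed by the number of remaining steps. -/
def Qval (n k : ℕ) (hk : k ≤ n) (p01 p11 β : ℝ) : ℕ → (Fin n → ℝ) → Finset (Fin n) → ℝ
  | 0, ω, a => ∑ i ∈ a, ω i
  | r + 1, ω, a =>
      (∑ i ∈ a, ω i) +
        β * ∑ s : {i // i ∈ a} → Bool,
          obsProb ω a s * Vval n k hk p01 p11 β r (nextState p01 p11 ω a s)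

/-- Replace the coordinates in positions `j` and `j+1` (`0`-indexed) by `x` and `y`. -/
def upd2 {n : ℕ} (ω : Fin n → ℝ) (j : ℕ) (hj : j + 1 < n) (x y : ℝ) : Fin n → ℝ :=
  Function.update (Function.update ω ⟨j, by omega⟩ x) ⟨j + 1, hj⟩ y

/-- The cyclic shift `(ω_2, …, ω_n, ω_1)`. -/
def cyc {n : ℕ} (hn : 0 < n) (ω : Fin n → ℝ) : Fin n → ℝ :=
  fun j => ω ⟨(j.val + 1) % n, Nat.mod_lt _ hn⟩

end

noncomputable section AuxZ

namespace AuxZ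

/-- insert value `c` at position `i` into the "list" `d` -/
def insV (n : ℕ) (d : ℕ → ℝ) (c : ℝ) (i : ℕ) : Fin n → ℝ :=
  fun j => if j.val < i then d j.val else if j.val = i then c else d (j.val - 1)

variable {n : ℕ} (g : (Fin n → ℝ) → ℝ)

lemma swap_ge
    (hB : ∀ ω : Fin n → ℝ, Monotone ω → (∀ i, ω i ∈ Set.Icc (0:ℝ) 1) →
      ∀ (j : ℕ) (hj : j + 1 < n), ∀ x y : ℝ,
        x ∈ Set.Icc (0:ℝ) 1 → y ∈ Set.Icc (0:ℝ) 1 → y ≤ x →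
          g (upd2 ω j hj y x) ≥ g (upd2 ω j hj x y))
    (v : Fin n → ℝ) (hv : ∀ i, v i ∈ Set.Icc (0:ℝ) 1)
    (j : ℕ) (hj : j + 1 < n)
    (hoff : ∀ i1 i2 : Fin n, i1.val < i2.val → i1.val ≠ j → i1.val ≠ j+1 →
      i2.val ≠ j → i2.val ≠ j+1 → v i1 ≤ v i2)
    (hle : v ⟨j+1, hj⟩ ≤ v ⟨j, by omega⟩) :
    g (fun i => if i.val = j then v ⟨j+1, hj⟩ else if i.val = j+1 then v ⟨j, by omega⟩ else v i)
      ≥ g v := by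
  set c : ℝ := if h : j + 2 < n then v ⟨j+2, h⟩ else if h : 0 < j then v ⟨j-1, by omega⟩ else 0
    with hc
  have hcmem : c ∈ Set.Icc (0:ℝ) 1 := by
    rw [hc]; split_ifs <;> first | exact hv _ | exact ⟨le_refl 0, zero_le_one⟩
  set ω : Fin n → ℝ := fun i => if i.val = j ∨ i.val = j+1 then c else v i with hω
  have hmem : ∀ i, ω i ∈ Set.Icc (0:ℝ) 1 := by
    intro i; rw [hω]; dsimp only; split_ifs
    · exact hcmem
    · exact hv i
  have hmono : Monotone ω := by
    intro i1 i2 h12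
    rcases eq_or_lt_of_le h12 with rfl | hlt
    · exact le_refl _
    have hlt' : i1.val < i2.val := hlt
    rw [hω]; dsimp only
    by_cases h1 : i1.val = j ∨ i1.val = j + 1 <;> by_cases h2 : i2.val = j ∨ i2.val = j + 1
    · simp [h1, h2]
    · simp only [h1, h2, if_true, if_false]
      have hj2 : j + 2 ≤ i2.val := by omega
      have hj2n : j + 2 < n := by omega
      rw [hc, dif_pos hj2n]
      rcases eq_or_lt_of_le hj2 with he | hlt2
      · exact le_of_eq (congrArg v (Fin.ext he))
      · exact hoff ⟨j+2, hj2n⟩ i2 hlt2 (by simp only [Fin.val_mk]; omega)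
          (by simp only [Fin.val_mk]; omega) (by omega) (by omega)
    · simp only [h1, h2, if_true, if_false]
      have hi1 : i1.val < j := by omega
      rw [hc]
      by_cases hj2n : j + 2 < n
      · rw [dif_pos hj2n]
        exact hoff i1 ⟨j+2, hj2n⟩ (by simp only [Fin.val_mk]; omega) (by omega) (by omega)
          (by simp only [Fin.val_mk]; omega) (by simp only [Fin.val_mk]; omega)
      · rw [dif_neg hj2n, dif_pos (by omega : 0 < j)]
        rcases eq_or_lt_of_le (by omega : i1.val ≤ j - 1) with he | hlt2
        · exact le_of_eq (congrArg v (Fin.ext he))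
        · exact hoff i1 ⟨j-1, by omega⟩ hlt2 (by omega) (by omega)
            (by simp only [Fin.val_mk]; omega) (by simp only [Fin.val_mk]; omega)
    · simp only [h1, h2, if_false]
      exact hoff i1 i2 hlt' (by omega) (by omega) (by omega) (by omega)
  have key := hB ω hmono hmem j hj (v ⟨j, by omega⟩) (v ⟨j+1, hj⟩) (hv _) (hv _) hle
  have e1 : upd2 ω j hj (v ⟨j, by omega⟩) (v ⟨j+1, hj⟩) = v := by
    funext i
    simp only [upd2, Function.update_apply]
    rcases eq_or_ne i (⟨j+1, hj⟩ : Fin n) with rfl | hne1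
    · simp
    · rw [if_neg hne1]
      rcases eq_or_ne i (⟨j, by omega⟩ : Fin n) with rfl | hne2
      · simp
      · rw [if_neg hne2, hω]
        dsimp only
        rw [if_neg]
        intro hor
        rcases hor with h | h
        · exact hne2 (Fin.ext h)
        · exact hne1 (Fin.ext h)
  have e2 : upd2 ω j hj (v ⟨j+1, hj⟩) (v ⟨j, by omega⟩) =
      (fun i => if i.val = j then v ⟨j+1, hj⟩ else if i.val = j+1 then v ⟨j, by omega⟩ else v i) := by
    funext i
    simp only [upd2, Function.update_apply]
    rcases eq_or_ne i (⟨j+1, hj⟩ : Fin n) with rfl | hne1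
    · simp
    · rw [if_neg hne1]
      rcases eq_or_ne i (⟨j, by omega⟩ : Fin n) with rfl | hne2
      · simp
      · rw [if_neg hne2, hω]
        dsimp only
        have hij : i.val ≠ j := fun h => hne2 (Fin.ext h)
        have hij1 : i.val ≠ j + 1 := fun h => hne1 (Fin.ext h)
        rw [if_neg (by tauto), if_neg hij, if_neg hij1]
  rw [e1, e2] at key
  exact key



lemma insV_move_left_step
    (hB : ∀ ω : Fin n → ℝ, Monotone ω → (∀ i, ω i ∈ Set.Icc (0:ℝ) 1) →
      ∀ (j : ℕ) (hj : j + 1 < n), ∀ x y : ℝ,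
        x ∈ Set.Icc (0:ℝ) 1 → y ∈ Set.Icc (0:ℝ) 1 → y ≤ x →
          g (upd2 ω j hj y x) ≥ g (upd2 ω j hj x y))
    (d : ℕ → ℝ) (hd01 : ∀ a, a < n - 1 → d a ∈ Set.Icc (0:ℝ) 1)
    (hdmono : ∀ a b, a ≤ b → b < n - 1 → d a ≤ d b)
    (c : ℝ) (hc : c ∈ Set.Icc (0:ℝ) 1)
    (hcle : ∀ a, a < n - 1 → c ≤ d a)
    (i : ℕ) (hi : i + 1 ≤ n - 1) :
    g (insV n d c i) ≥ g (insV n d c (i+1)) := by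
  have hn2 : 2 ≤ n := by omega
  have hj : i + 1 < n := by omega
  set v := insV n d c (i+1) with hv
  have hv01 : ∀ p, v p ∈ Set.Icc (0:ℝ) 1 := by
    intro p; rw [hv]; simp only [insV]
    split_ifs with h1 h2
    · exact hd01 _ (by omega)
    · exact hc
    · exact hd01 _ (by omega)
  have hvj : v ⟨i, by omega⟩ = d i := by simp [hv, insV]
  have hvj1 : v ⟨i+1, hj⟩ = c := by simp [hv, insV]
  have hle : v ⟨i+1, hj⟩ ≤ v ⟨i, by omega⟩ := by
    rw [hvj, hvj1]; exact hcle i (by omega)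
  have hoff : ∀ i1 i2 : Fin n, i1.val < i2.val → i1.val ≠ i → i1.val ≠ i+1 →
      i2.val ≠ i → i2.val ≠ i+1 → v i1 ≤ v i2 := by
    intro i1 i2 h12 a1 a2 a3 a4
    rw [hv]; simp only [insV]
    split_ifs <;> exact hdmono _ _ (by omega) (by omega)
  have key := swap_ge g hB v hv01 i hj hoff hle
  have e : (fun p : Fin n => if p.val = i then v ⟨i+1, hj⟩ else if p.val = i+1 then v ⟨i, by omega⟩ else v p)
      = insV n d c i := by
    funext p
    rw [hvj, hvj1, hv]; simp only [insV]
    split_ifs <;> first | rfl | omega | (congr 1; omega)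
  rw [e] at key
  exact key

lemma insV_move_right_step
    (hB : ∀ ω : Fin n → ℝ, Monotone ω → (∀ i, ω i ∈ Set.Icc (0:ℝ) 1) →
      ∀ (j : ℕ) (hj : j + 1 < n), ∀ x y : ℝ,
        x ∈ Set.Icc (0:ℝ) 1 → y ∈ Set.Icc (0:ℝ) 1 → y ≤ x →
          g (upd2 ω j hj y x) ≥ g (upd2 ω j hj x y))
    (d : ℕ → ℝ) (hd01 : ∀ a, a < n - 1 → d a ∈ Set.Icc (0:ℝ) 1)
    (hdmono : ∀ a b, a ≤ b → b < n - 1 → d a ≤ d b)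
    (c : ℝ) (hc : c ∈ Set.Icc (0:ℝ) 1)
    (hcge : ∀ a, a < n - 1 → d a ≤ c)
    (i : ℕ) (hi : i + 1 ≤ n - 1) :
    g (insV n d c (i+1)) ≥ g (insV n d c i) := by
  have hn2 : 2 ≤ n := by omega
  have hj : i + 1 < n := by omega
  set v := insV n d c i with hv
  have hv01 : ∀ p, v p ∈ Set.Icc (0:ℝ) 1 := by
    intro p; rw [hv]; simp only [insV]
    split_ifs with h1 h2
    · exact hd01 _ (by omega)
    · exact hc
    · exact hd01 _ (by omega)
  have hvj : v ⟨i, by omega⟩ = c := by simp [hv, insV]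
  have hvj1 : v ⟨i+1, hj⟩ = d i := by
    simp only [hv, insV, Fin.val_mk]
    rw [if_neg (by omega), if_neg (by omega)]
    congr 1
  have hle : v ⟨i+1, hj⟩ ≤ v ⟨i, by omega⟩ := by
    rw [hvj, hvj1]; exact hcge i (by omega)
  have hoff : ∀ i1 i2 : Fin n, i1.val < i2.val → i1.val ≠ i → i1.val ≠ i+1 →
      i2.val ≠ i → i2.val ≠ i+1 → v i1 ≤ v i2 := by
    intro i1 i2 h12 a1 a2 a3 a4
    rw [hv]; simp only [insV]
    split_ifs <;> exact hdmono _ _ (by omega) (by omega)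
  have key := swap_ge g hB v hv01 i hj hoff hle
  have e : (fun p : Fin n => if p.val = i then v ⟨i+1, hj⟩ else if p.val = i+1 then v ⟨i, by omega⟩ else v p)
      = insV n d c (i+1) := by
    funext p
    rw [hvj, hvj1, hv]; simp only [insV]
    split_ifs <;> first | rfl | omega | (congr 1; omega)
  rw [e] at key
  exact key
lemma insV_move_left
    (hB : ∀ ω : Fin n → ℝ, Monotone ω → (∀ i, ω i ∈ Set.Icc (0:ℝ) 1) →
      ∀ (j : ℕ) (hj : j + 1 < n), ∀ x y : ℝ,
        x ∈ Set.Icc (0:ℝ) 1 → y ∈ Set.Icc (0:ℝ) 1 → y ≤ x →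
          g (upd2 ω j hj y x) ≥ g (upd2 ω j hj x y))
    (d : ℕ → ℝ) (hd01 : ∀ a, a < n - 1 → d a ∈ Set.Icc (0:ℝ) 1)
    (hdmono : ∀ a b, a ≤ b → b < n - 1 → d a ≤ d b)
    (c : ℝ) (hc : c ∈ Set.Icc (0:ℝ) 1)
    (hcle : ∀ a, a < n - 1 → c ≤ d a)
    (i i' : ℕ) (hii' : i ≤ i') (hi' : i' ≤ n - 1) :
    g (insV n d c i) ≥ g (insV n d c i') := by
  induction i' with
  | zero => have : i = 0 := by omega
            subst this; exact le_refl _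
  | succ m ih =>
    rcases Nat.lt_or_ge i (m+1) with h | h
    · have h1 : g (insV n d c m) ≥ g (insV n d c (m+1)) :=
        insV_move_left_step g hB d hd01 hdmono c hc hcle m (by omega)
      exact le_trans h1 (ih (by omega) (by omega))
    · have : i = m + 1 := by omega
      subst this; exact le_refl _

lemma insV_move_right
    (hB : ∀ ω : Fin n → ℝ, Monotone ω → (∀ i, ω i ∈ Set.Icc (0:ℝ) 1) →
      ∀ (j : ℕ) (hj : j + 1 < n), ∀ x y : ℝ,
        x ∈ Set.Icc (0:ℝ) 1 → y ∈ Set.Icc (0:ℝ) 1 → y ≤ x →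
          g (upd2 ω j hj y x) ≥ g (upd2 ω j hj x y))
    (d : ℕ → ℝ) (hd01 : ∀ a, a < n - 1 → d a ∈ Set.Icc (0:ℝ) 1)
    (hdmono : ∀ a b, a ≤ b → b < n - 1 → d a ≤ d b)
    (c : ℝ) (hc : c ∈ Set.Icc (0:ℝ) 1)
    (hcge : ∀ a, a < n - 1 → d a ≤ c)
    (i i' : ℕ) (hii' : i ≤ i') (hi' : i' ≤ n - 1) :
    g (insV n d c i') ≥ g (insV n d c i) := by
  induction i' with
  | zero => have : i = 0 := by omega
            subst this; exact le_refl _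
  | succ m ih =>
    rcases Nat.lt_or_ge i (m+1) with h | h
    · have h1 : g (insV n d c (m+1)) ≥ g (insV n d c m) :=
        insV_move_right_step g hB d hd01 hdmono c hc hcge m (by omega)
      exact le_trans (ih (by omega) (by omega)) h1
    · have : i = m + 1 := by omega
      subst this; exact le_refl _

lemma insV_cycA (hn : 0 < n)
    (hA : ∀ ω : Fin n → ℝ, Monotone ω → (∀ i, ω i ∈ Set.Icc (0:ℝ) 1) →
      1 + g (cyc hn ω) ≥ g ω)
    (d : ℕ → ℝ) (hd01 : ∀ a, a < n - 1 → d a ∈ Set.Icc (0:ℝ) 1)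
    (hdmono : ∀ a b, a ≤ b → b < n - 1 → d a ≤ d b)
    (c : ℝ) (hc : c ∈ Set.Icc (0:ℝ) 1)
    (hcle : ∀ a, a < n - 1 → c ≤ d a) :
    1 + g (insV n d c (n-1)) ≥ g (insV n d c 0) := by
  have hmono : Monotone (insV n d c 0) := by
    intro i1 i2 h12
    rcases eq_or_lt_of_le h12 with rfl | hlt
    · exact le_refl _
    have hlt' : i1.val < i2.val := hlt
    simp only [insV]
    split_ifs <;>
      first
        | (exfalso; omega)
        | exact le_refl _
        | exact hcle _ (by omega)
        | exact hdmono _ _ (by omega) (by omega)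
  have hmem : ∀ i, insV n d c 0 i ∈ Set.Icc (0:ℝ) 1 := by
    intro i; simp only [insV]
    split_ifs
    · exfalso; omega
    · exact hc
    · exact hd01 _ (by omega)
  have key := hA (insV n d c 0) hmono hmem
  have e : cyc hn (insV n d c 0) = insV n d c (n-1) := by
    funext p
    simp only [cyc, insV]
    rcases Nat.lt_or_ge (p.val + 1) n with h | h
    · rw [Nat.mod_eq_of_lt h]
      split_ifs
      all_goals (try rfl)
      all_goals (try (exfalso; first | assumption | omega))
    · rw [show (p.val + 1) % n = 0 by rw [show p.val + 1 = n by omega]; exact Nat.mod_self n]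
      split_ifs
      all_goals (try rfl)
      all_goals (try (exfalso; first | assumption | omega))
  rw [e] at key
  exact key
lemma insV_affine
    (haffine : ∀ ω : Fin n → ℝ, (∀ j, ω j ∈ Set.Icc (0:ℝ) 1) → ∀ i : Fin n,
      ∀ x ∈ Set.Icc (0:ℝ) 1,
        g (Function.update ω i x) =
          (1 - x) * g (Function.update ω i 0) + x * g (Function.update ω i 1))
    (d : ℕ → ℝ) (hd01 : ∀ a, a < n - 1 → d a ∈ Set.Icc (0:ℝ) 1)
    (i : ℕ) (hi : i < n) (p01 p11 z : ℝ)
    (hp01 : p01 ∈ Set.Icc (0:ℝ) 1) (hp11 : p11 ∈ Set.Icc (0:ℝ) 1)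
    (hz : z ∈ Set.Icc (0:ℝ) 1) :
    g (insV n d (tauF p01 p11 z) i) =
      (1 - z) * g (insV n d p01 i) + z * g (insV n d p11 i) := by
  have hbase : ∀ j, insV n d 0 i j ∈ Set.Icc (0:ℝ) 1 := by
    intro j; simp only [insV]
    split_ifs
    · exact hd01 _ (by omega)
    · exact ⟨le_refl 0, zero_le_one⟩
    · exact hd01 _ (by omega)
  have hupd : ∀ t : ℝ, Function.update (insV n d 0 i) ⟨i, hi⟩ t = insV n d t i := by
    intro t; funext p
    rcases eq_or_ne p (⟨i, hi⟩ : Fin n) with rfl | hne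
    · simp [insV]
    · rw [Function.update_of_ne hne]
      have : p.val ≠ i := fun h => hne (Fin.ext h)
      simp only [insV, if_neg this]
  have key : ∀ t : ℝ, t ∈ Set.Icc (0:ℝ) 1 →
      g (insV n d t i) = (1 - t) * g (insV n d 0 i) + t * g (insV n d 1 i) := by
    intro t ht
    have := haffine (insV n d 0 i) hbase ⟨i, hi⟩ t ht
    rwa [hupd t, hupd 0, hupd 1] at this
  have htz : tauF p01 p11 z ∈ Set.Icc (0:ℝ) 1 := by
    constructor
    · have := mul_nonneg hz.1 hp11.1
      have := mul_nonneg (by linarith [hz.2] : (0:ℝ) ≤ 1 - z) hp01.1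
      simp only [tauF]; linarith
    · have h1 : z * p11 ≤ z * 1 := mul_le_mul_of_nonneg_left hp11.2 hz.1
      have h2 : (1 - z) * p01 ≤ (1 - z) * 1 :=
        mul_le_mul_of_nonneg_left hp01.2 (by linarith [hz.2])
      simp only [tauF]; linarith
  rw [key _ htz, key _ hp01, key _ hp11]
  simp only [tauF]
  ring
lemma tauF_mem (p01 p11 x : ℝ) (hp01 : p01 ∈ Set.Icc (0:ℝ) 1)
    (hp11 : p11 ∈ Set.Icc (0:ℝ) 1) (hx : x ∈ Set.Icc (0:ℝ) 1) :
    tauF p01 p11 x ∈ Set.Icc (0:ℝ) 1 := by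
  constructor
  · have h1 := mul_nonneg hx.1 hp11.1
    have h2 := mul_nonneg (by linarith [hx.2] : (0:ℝ) ≤ 1 - x) hp01.1
    simp only [tauF]; linarith
  · have h1 : x * p11 ≤ x * 1 := mul_le_mul_of_nonneg_left hp11.2 hx.1
    have h2 : (1 - x) * p01 ≤ (1 - x) * 1 :=
      mul_le_mul_of_nonneg_left hp01.2 (by linarith [hx.2])
    simp only [tauF]; linarith

lemma tauF_mono (p01 p11 x y : ℝ) (hord : p01 ≤ p11) (hxy : x ≤ y) :
    tauF p01 p11 x ≤ tauF p01 p11 y := by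
  simp only [tauF]; nlinarith [mul_nonneg (sub_nonneg.2 hxy) (sub_nonneg.2 hord)]

lemma tauF_ge (p01 p11 x : ℝ) (hord : p01 ≤ p11) (hx : 0 ≤ x) :
    p01 ≤ tauF p01 p11 x := by
  simp only [tauF]; nlinarith [mul_nonneg hx (sub_nonneg.2 hord)]

lemma tauF_le (p01 p11 x : ℝ) (hord : p01 ≤ p11) (hx : x ≤ 1) :
    tauF p01 p11 x ≤ p11 := by
  simp only [tauF]; nlinarith [mul_nonneg (sub_nonneg.2 hx) (sub_nonneg.2 hord)]

lemma tau_congr (ω : Fin n → ℝ) (p01 p11 : ℝ) (a b : ℕ) (ha : a < n) (hb : b < n)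
    (hab : a = b) : tauF p01 p11 (ω ⟨a, ha⟩) = tauF p01 p11 (ω ⟨b, hb⟩) := by
  subst hab; rfl

-- value lemmas for insV
lemma insV_lt (d : ℕ → ℝ) (c : ℝ) (i : ℕ) (j : Fin n) (h : j.val < i) :
    insV n d c i j = d j.val := by
  simp only [insV]; rw [if_pos h]

lemma insV_at (d : ℕ → ℝ) (c : ℝ) (i : ℕ) (j : Fin n) (h : j.val = i) :
    insV n d c i j = c := by
  simp only [insV]; rw [if_neg (by omega), if_pos h]

lemma insV_gt (d : ℕ → ℝ) (c : ℝ) (i : ℕ) (j : Fin n) (h : i < j.val) :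
    insV n d c i j = d (j.val - 1) := by
  simp only [insV]; rw [if_neg (by omega), if_neg (by omega)]

-- value lemmas for vl
lemma vl_lo (k m : ℕ) (p01 p11 : ℝ) (ω : Fin n → ℝ) (j : Fin n) (h : j.val < k - m) :
    vl k p01 p11 ω m j = p01 := by
  simp only [vl]; rw [if_pos h]

lemma vl_mid (k m : ℕ) (p01 p11 : ℝ) (ω : Fin n → ℝ) (j : Fin n)
    (h1 : k - m ≤ j.val) (h2 : j.val < n - m) :
    vl k p01 p11 ω m j = tauF p01 p11 (ω ⟨j.val - (k - m), by omega⟩) := by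
  simp only [vl]; rw [if_neg (by omega), if_pos h2]

lemma vl_hi (k m : ℕ) (hkn : k ≤ n) (p01 p11 : ℝ) (ω : Fin n → ℝ) (j : Fin n) (h : n - m ≤ j.val) :
    vl k p01 p11 ω m j = p11 := by
  simp only [vl]; rw [if_neg (by omega), if_neg (by omega)]

lemma cyc_at (hn : 0 < n) (ω : Fin n → ℝ) (p : Fin n) (hp : p.val + 1 < n) :
    cyc hn ω p = ω ⟨p.val + 1, hp⟩ := by
  simp only [cyc]
  congr 1
  exact Fin.ext (by simp only [Fin.val_mk]; exact Nat.mod_eq_of_lt hp)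

/-- the sorted "deleted" vector: `K` copies of `p01`, then the updated beliefs,
then copies of `p11`. -/
def dfun (n k m off : ℕ) (p01 p11 : ℝ) (ω : Fin n → ℝ) : ℕ → ℝ :=
  fun t =>
    if t < k - m - 1 then p01
    else if h2 : t - (k - m - 1) + off < n ∧ t < k - m - 1 + (n - k) then
      tauF p01 p11 (ω ⟨t - (k - m - 1) + off, h2.1⟩)
    else p11

section DF

variable {n : ℕ} (k m off : ℕ) (p01 p11 : ℝ) (ω : Fin n → ℝ)
variable (hoff : off ≤ 1) (hk1 : 1 ≤ k) (hkn : k ≤ n) (hm : m + 1 ≤ k)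

include hoff hk1 hkn hm

lemma dfun_lo (t : ℕ) (h : t < k - m - 1) : dfun n k m off p01 p11 ω t = p01 := by
  simp only [dfun]; rw [if_pos h]

lemma dfun_mid (t : ℕ) (h1 : k - m - 1 ≤ t) (h2 : t < k - m - 1 + (n - k)) :
    dfun n k m off p01 p11 ω t
      = tauF p01 p11 (ω ⟨t - (k - m - 1) + off, by omega⟩) := by
  simp only [dfun]; rw [if_neg (by omega), dif_pos ⟨by omega, h2⟩]

lemma dfun_hi (t : ℕ) (h : k - m - 1 + (n - k) ≤ t) :
    dfun n k m off p01 p11 ω t = p11 := by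
  simp only [dfun]
  rw [if_neg (by omega), dif_neg (by omega)]

lemma dfun_mem (hp01 : p01 ∈ Set.Icc (0:ℝ) 1) (hp11 : p11 ∈ Set.Icc (0:ℝ) 1)
    (hω01 : ∀ i, ω i ∈ Set.Icc (0:ℝ) 1) (t : ℕ) :
    dfun n k m off p01 p11 ω t ∈ Set.Icc (0:ℝ) 1 := by
  rcases Nat.lt_or_ge t (k - m - 1) with h | h
  · rw [dfun_lo k m off p01 p11 ω hoff hk1 hkn hm t h]; exact hp01
  rcases Nat.lt_or_ge t (k - m - 1 + (n - k)) with h' | h'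
  · rw [dfun_mid k m off p01 p11 ω hoff hk1 hkn hm t h h']
    exact tauF_mem p01 p11 _ hp01 hp11 (hω01 _)
  · rw [dfun_hi k m off p01 p11 ω hoff hk1 hkn hm t h']; exact hp11

lemma dfun_mono (hord : p01 ≤ p11) (hmono : Monotone ω)
    (hω01 : ∀ i, ω i ∈ Set.Icc (0:ℝ) 1) (a b : ℕ) (hab : a ≤ b) :
    dfun n k m off p01 p11 ω a ≤ dfun n k m off p01 p11 ω b := by
  rcases Nat.lt_or_ge a (k - m - 1) with h1 | h1
  · rw [dfun_lo k m off p01 p11 ω hoff hk1 hkn hm a h1]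
    rcases Nat.lt_or_ge b (k - m - 1) with h2 | h2
    · rw [dfun_lo k m off p01 p11 ω hoff hk1 hkn hm b h2]
    rcases Nat.lt_or_ge b (k - m - 1 + (n - k)) with h3 | h3
    · rw [dfun_mid k m off p01 p11 ω hoff hk1 hkn hm b h2 h3]
      exact tauF_ge p01 p11 _ hord (hω01 _).1
    · rw [dfun_hi k m off p01 p11 ω hoff hk1 hkn hm b h3]; exact hord
  rcases Nat.lt_or_ge a (k - m - 1 + (n - k)) with h1' | h1'
  · rw [dfun_mid k m off p01 p11 ω hoff hk1 hkn hm a h1 h1']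
    rcases Nat.lt_or_ge b (k - m - 1 + (n - k)) with h3 | h3
    · rw [dfun_mid k m off p01 p11 ω hoff hk1 hkn hm b (by omega) h3]
      exact tauF_mono p01 p11 _ _ hord (hmono (by simp only [Fin.mk_le_mk]; omega))
    · rw [dfun_hi k m off p01 p11 ω hoff hk1 hkn hm b h3]
      exact tauF_le p01 p11 _ hord (hω01 _).2
  · rw [dfun_hi k m off p01 p11 ω hoff hk1 hkn hm a h1',
      dfun_hi k m off p01 p11 ω hoff hk1 hkn hm b (by omega)]

lemma dfun_ge_p01 (hord : p01 ≤ p11) (hω01 : ∀ i, ω i ∈ Set.Icc (0:ℝ) 1) (t : ℕ) :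
    p01 ≤ dfun n k m off p01 p11 ω t := by
  rcases Nat.lt_or_ge t (k - m - 1) with h | h
  · rw [dfun_lo k m off p01 p11 ω hoff hk1 hkn hm t h]
  rcases Nat.lt_or_ge t (k - m - 1 + (n - k)) with h' | h'
  · rw [dfun_mid k m off p01 p11 ω hoff hk1 hkn hm t h h']
    exact tauF_ge p01 p11 _ hord (hω01 _).1
  · rw [dfun_hi k m off p01 p11 ω hoff hk1 hkn hm t h']; exact hord

lemma dfun_le_p11 (hord : p01 ≤ p11) (hω01 : ∀ i, ω i ∈ Set.Icc (0:ℝ) 1) (t : ℕ) :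
    dfun n k m off p01 p11 ω t ≤ p11 := by
  rcases Nat.lt_or_ge t (k - m - 1) with h | h
  · rw [dfun_lo k m off p01 p11 ω hoff hk1 hkn hm t h]; exact hord
  rcases Nat.lt_or_ge t (k - m - 1 + (n - k)) with h' | h'
  · rw [dfun_mid k m off p01 p11 ω hoff hk1 hkn hm t h h']
    exact tauF_le p01 p11 _ hord (hω01 _).2
  · rw [dfun_hi k m off p01 p11 ω hoff hk1 hkn hm t h']

end DF
section KeyIneq

variable {n : ℕ} (g : (Fin n → ℝ) → ℝ)

lemma key_ineq (hn : 0 < n)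
    (k m : ℕ) (hk1 : 1 ≤ k) (hkn : k ≤ n) (hm : m + 1 ≤ k)
    (p01 p11 β : ℝ)
    (hp01 : p01 ∈ Set.Icc (0:ℝ) 1) (hp11 : p11 ∈ Set.Icc (0:ℝ) 1)
    (hβ : β ∈ Set.Icc (0:ℝ) 1) (hord : p01 ≤ p11)
    (haffine : ∀ ω : Fin n → ℝ, (∀ j, ω j ∈ Set.Icc (0:ℝ) 1) → ∀ i : Fin n,
      ∀ x ∈ Set.Icc (0:ℝ) 1,
        g (Function.update ω i x) =
          (1 - x) * g (Function.update ω i 0) + x * g (Function.update ω i 1))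
    (hA : ∀ ω : Fin n → ℝ, Monotone ω → (∀ i, ω i ∈ Set.Icc (0:ℝ) 1) →
      1 + g (cyc hn ω) ≥ g ω)
    (hB : ∀ ω : Fin n → ℝ, Monotone ω → (∀ i, ω i ∈ Set.Icc (0:ℝ) 1) →
      ∀ (j : ℕ) (hj : j + 1 < n), ∀ x y : ℝ,
        x ∈ Set.Icc (0:ℝ) 1 → y ∈ Set.Icc (0:ℝ) 1 → y ≤ x →
          g (upd2 ω j hj y x) ≥ g (upd2 ω j hj x y))
    (ω : Fin n → ℝ) (hmono : Monotone ω) (hω01 : ∀ i, ω i ∈ Set.Icc (0:ℝ) 1) :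
    ω ⟨n-k, by omega⟩ + β * (ω ⟨n-k, by omega⟩ * g (vl k p01 p11 ω (m+1)) +
        (1 - ω ⟨n-k, by omega⟩) * g (vl k p01 p11 ω m))
      ≤ 1 + ω ⟨0, hn⟩ + β * (ω ⟨0, hn⟩ * g (vl k p01 p11 (cyc hn ω) (m+1)) +
        (1 - ω ⟨0, hn⟩) * g (vl k p01 p11 (cyc hn ω) m)) := by
  set dA := dfun n k m 0 p01 p11 ω with hdA
  set dB := dfun n k m 1 p01 p11 ω with hdB
  have hdA01 : ∀ a, a < n - 1 → dA a ∈ Set.Icc (0:ℝ) 1 :=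
    fun a _ => dfun_mem k m 0 p01 p11 ω (by omega) hk1 hkn hm hp01 hp11 hω01 a
  have hdB01 : ∀ a, a < n - 1 → dB a ∈ Set.Icc (0:ℝ) 1 :=
    fun a _ => dfun_mem k m 1 p01 p11 ω (by omega) hk1 hkn hm hp01 hp11 hω01 a
  have hdAmono : ∀ a b, a ≤ b → b < n - 1 → dA a ≤ dA b :=
    fun a b hab _ => dfun_mono k m 0 p01 p11 ω (by omega) hk1 hkn hm hord hmono hω01 a b hab
  have hdBmono : ∀ a b, a ≤ b → b < n - 1 → dB a ≤ dB b :=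
    fun a b hab _ => dfun_mono k m 1 p01 p11 ω (by omega) hk1 hkn hm hord hmono hω01 a b hab
  have hdAle : ∀ a, a < n - 1 → p01 ≤ dA a :=
    fun a _ => dfun_ge_p01 k m 0 p01 p11 ω (by omega) hk1 hkn hm hord hω01 a
  have hdBle : ∀ a, a < n - 1 → p01 ≤ dB a :=
    fun a _ => dfun_ge_p01 k m 1 p01 p11 ω (by omega) hk1 hkn hm hord hω01 a
  have hdAge : ∀ a, a < n - 1 → dA a ≤ p11 :=
    fun a _ => dfun_le_p11 k m 0 p01 p11 ω (by omega) hk1 hkn hm hord hω01 a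
  have hdBge : ∀ a, a < n - 1 → dB a ≤ p11 :=
    fun a _ => dfun_le_p11 k m 1 p01 p11 ω (by omega) hk1 hkn hm hord hω01 a
  -- identifications
  have eA0 : vl k p01 p11 ω m = insV n dA p01 (k-m-1) := by
    funext j
    rcases Nat.lt_trichotomy j.val (k-m-1) with h | h | h
    · rw [vl_lo k m p01 p11 ω j (by omega), insV_lt _ _ _ _ h, hdA,
        dfun_lo k m 0 p01 p11 ω (by omega) hk1 hkn hm _ (by omega)]
    · rw [vl_lo k m p01 p11 ω j (by omega), insV_at _ _ _ _ h]
    · rw [insV_gt _ _ _ _ h]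
      rcases Nat.lt_or_ge j.val (n - m) with h2 | h2
      · rw [vl_mid k m p01 p11 ω j (by omega) h2, hdA,
          dfun_mid k m 0 p01 p11 ω (by omega) hk1 hkn hm _ (by omega) (by omega)]
        exact tau_congr ω p01 p11 _ _ _ _ (by omega)
      · rw [vl_hi k m hkn p01 p11 ω j h2, hdA,
          dfun_hi k m 0 p01 p11 ω (by omega) hk1 hkn hm _ (by omega)]
  have eA1 : vl k p01 p11 ω (m+1) = insV n dA p11 (k-m-1 + (n-k)) := by
    funext j
    rcases Nat.lt_trichotomy j.val (k-m-1 + (n-k)) with h | h | h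
    · rw [insV_lt _ _ _ _ h]
      rcases Nat.lt_or_ge j.val (k-m-1) with h2 | h2
      · rw [vl_lo k (m+1) p01 p11 ω j (by omega), hdA,
          dfun_lo k m 0 p01 p11 ω (by omega) hk1 hkn hm _ h2]
      · rw [vl_mid k (m+1) p01 p11 ω j (by omega) (by omega), hdA,
          dfun_mid k m 0 p01 p11 ω (by omega) hk1 hkn hm _ h2 (by omega)]
        exact tau_congr ω p01 p11 _ _ _ _ (by omega)
    · rw [insV_at _ _ _ _ h, vl_hi k (m+1) hkn p01 p11 ω j (by omega)]
    · rw [insV_gt _ _ _ _ h, vl_hi k (m+1) hkn p01 p11 ω j (by omega), hdA,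
        dfun_hi k m 0 p01 p11 ω (by omega) hk1 hkn hm _ (by omega)]
  have eB0 : vl k p01 p11 (cyc hn ω) m = insV n dB p01 (k-m-1) := by
    funext j
    rcases Nat.lt_trichotomy j.val (k-m-1) with h | h | h
    · rw [vl_lo k m p01 p11 (cyc hn ω) j (by omega), insV_lt _ _ _ _ h, hdB,
        dfun_lo k m 1 p01 p11 ω (by omega) hk1 hkn hm _ (by omega)]
    · rw [vl_lo k m p01 p11 (cyc hn ω) j (by omega), insV_at _ _ _ _ h]
    · rw [insV_gt _ _ _ _ h]
      rcases Nat.lt_or_ge j.val (n - m) with h2 | h2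
      · rw [vl_mid k m p01 p11 (cyc hn ω) j (by omega) h2,
          cyc_at hn ω _ (by simp only [Fin.val_mk]; omega), hdB,
          dfun_mid k m 1 p01 p11 ω (by omega) hk1 hkn hm _ (by omega) (by omega)]
        exact tau_congr ω p01 p11 _ _ _ _ (by simp only [Fin.val_mk]; omega)
      · rw [vl_hi k m hkn p01 p11 (cyc hn ω) j h2, hdB,
          dfun_hi k m 1 p01 p11 ω (by omega) hk1 hkn hm _ (by omega)]
  have eB1 : vl k p01 p11 (cyc hn ω) (m+1) = insV n dB p11 (k-m-1 + (n-k)) := by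
    funext j
    rcases Nat.lt_trichotomy j.val (k-m-1 + (n-k)) with h | h | h
    · rw [insV_lt _ _ _ _ h]
      rcases Nat.lt_or_ge j.val (k-m-1) with h2 | h2
      · rw [vl_lo k (m+1) p01 p11 (cyc hn ω) j (by omega), hdB,
          dfun_lo k m 1 p01 p11 ω (by omega) hk1 hkn hm _ h2]
      · rw [vl_mid k (m+1) p01 p11 (cyc hn ω) j (by omega) (by omega),
          cyc_at hn ω _ (by simp only [Fin.val_mk]; omega), hdB,
          dfun_mid k m 1 p01 p11 ω (by omega) hk1 hkn hm _ h2 (by omega)]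
        exact tau_congr ω p01 p11 _ _ _ _ (by simp only [Fin.val_mk]; omega)
    · rw [insV_at _ _ _ _ h, vl_hi k (m+1) hkn p01 p11 (cyc hn ω) j (by omega)]
    · rw [insV_gt _ _ _ _ h, vl_hi k (m+1) hkn p01 p11 (cyc hn ω) j (by omega), hdB,
        dfun_hi k m 1 p01 p11 ω (by omega) hk1 hkn hm _ (by omega)]
  have eS : insV n dA (tauF p01 p11 (ω ⟨n-k, by omega⟩)) (k-m-1 + (n-k))
      = insV n dB (tauF p01 p11 (ω ⟨0, hn⟩)) (k-m-1) := by
    funext j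
    rcases Nat.lt_trichotomy j.val (k-m-1) with h | h | h
    · rw [insV_lt _ _ _ _ (by omega), insV_lt _ _ _ _ h, hdA, hdB,
        dfun_lo k m 0 p01 p11 ω (by omega) hk1 hkn hm _ (by omega),
        dfun_lo k m 1 p01 p11 ω (by omega) hk1 hkn hm _ (by omega)]
    · rw [insV_at _ _ _ _ h]
      rcases Nat.eq_zero_or_pos (n - k) with hN | hN
      · rw [insV_at _ _ _ _ (by omega)]
        exact tau_congr ω p01 p11 _ _ _ _ (by omega)
      · rw [insV_lt _ _ _ _ (by omega), hdA,
          dfun_mid k m 0 p01 p11 ω (by omega) hk1 hkn hm _ (by omega) (by omega)]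
        exact tau_congr ω p01 p11 _ _ _ _ (by omega)
    · rcases Nat.lt_trichotomy j.val (k-m-1 + (n-k)) with h2 | h2 | h2
      · rw [insV_lt _ _ _ _ h2, insV_gt _ _ _ _ h, hdA, hdB,
          dfun_mid k m 0 p01 p11 ω (by omega) hk1 hkn hm _ (by omega) (by omega),
          dfun_mid k m 1 p01 p11 ω (by omega) hk1 hkn hm _ (by omega) (by omega)]
        exact tau_congr ω p01 p11 _ _ _ _ (by omega)
      · rw [insV_at _ _ _ _ h2, insV_gt _ _ _ _ h, hdB,
          dfun_mid k m 1 p01 p11 ω (by omega) hk1 hkn hm _ (by omega) (by omega)]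
        exact tau_congr ω p01 p11 _ _ _ _ (by omega)
      · rw [insV_gt _ _ _ _ (by omega), insV_gt _ _ _ _ h, hdA, hdB,
          dfun_hi k m 0 p01 p11 ω (by omega) hk1 hkn hm _ (by omega),
          dfun_hi k m 1 p01 p11 ω (by omega) hk1 hkn hm _ (by omega)]
  -- chains
  have c1 : g (insV n dA p01 (k-m-1)) ≤ g (insV n dA p01 0) :=
    insV_move_left g hB dA hdA01 hdAmono p01 hp01 hdAle 0 (k-m-1) (by omega) (by omega)
  have c2 : g (insV n dA p01 0) ≤ 1 + g (insV n dA p01 (n-1)) :=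
    insV_cycA g hn hA dA hdA01 hdAmono p01 hp01 hdAle
  have c3 : g (insV n dA p01 (n-1)) ≤ g (insV n dA p01 (k-m-1 + (n-k))) :=
    insV_move_left g hB dA hdA01 hdAmono p01 hp01 hdAle (k-m-1 + (n-k)) (n-1)
      (by omega) (by omega)
  have c4 : g (insV n dB p11 (k-m-1)) ≤ g (insV n dB p11 (k-m-1 + (n-k))) :=
    insV_move_right g hB dB hdB01 hdBmono p11 hp11 hdBge (k-m-1) (k-m-1 + (n-k))
      (by omega) (by omega)
  -- affine decompositions
  have hE2 : g (insV n dA (tauF p01 p11 (ω ⟨n-k, by omega⟩)) (k-m-1 + (n-k))) =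
      (1 - ω ⟨n-k, by omega⟩) * g (insV n dA p01 (k-m-1 + (n-k))) +
        ω ⟨n-k, by omega⟩ * g (insV n dA p11 (k-m-1 + (n-k))) :=
    insV_affine g haffine dA hdA01 (k-m-1 + (n-k)) (by omega) p01 p11 _ hp01 hp11 (hω01 _)
  have hE1 : g (insV n dB (tauF p01 p11 (ω ⟨0, hn⟩)) (k-m-1)) =
      (1 - ω ⟨0, hn⟩) * g (insV n dB p01 (k-m-1)) +
        ω ⟨0, hn⟩ * g (insV n dB p11 (k-m-1)) :=
    insV_affine g haffine dB hdB01 (k-m-1) (by omega) p01 p11 _ hp01 hp11 (hω01 _)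
  rw [eS] at hE2
  -- final arithmetic
  rw [eA0, eA1, eB0, eB1]
  have hz01 := hω01 ⟨0, hn⟩
  have hw01 := hω01 ⟨n-k, by omega⟩
  set z := ω ⟨0, hn⟩
  set w := ω (⟨n-k, by omega⟩ : Fin n)
  set GA0 := g (insV n dA p01 (k-m-1))
  set GA1 := g (insV n dA p11 (k-m-1 + (n-k)))
  set GB0 := g (insV n dB p01 (k-m-1))
  set GB1 := g (insV n dB p11 (k-m-1 + (n-k)))
  set gS := g (insV n dB (tauF p01 p11 z) (k-m-1))
  set gSp := g (insV n dA p01 (k-m-1 + (n-k)))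
  set gS1 := g (insV n dB p11 (k-m-1))
  have f1 : GA0 ≤ 1 + gSp := by linarith
  have f2 : gS = (1 - w) * gSp + w * GA1 := hE2
  have f3 : gS = (1 - z) * GB0 + z * gS1 := hE1
  have f4 : gS1 ≤ GB1 := c4
  have s1 : w * GA1 + (1 - w) * GA0 ≤ gS + (1 - w) := by
    nlinarith [mul_nonneg (by linarith [hw01.2] : (0:ℝ) ≤ 1 - w)
      (by linarith : (0:ℝ) ≤ 1 + gSp - GA0)]
  have s2 : gS ≤ z * GB1 + (1 - z) * GB0 := by
    nlinarith [mul_nonneg hz01.1 (by linarith : (0:ℝ) ≤ GB1 - gS1)]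
  have t1 : β * (w * GA1 + (1 - w) * GA0) ≤ β * (gS + (1 - w)) :=
    mul_le_mul_of_nonneg_left s1 hβ.1
  have t2 : β * gS ≤ β * (z * GB1 + (1 - z) * GB0) :=
    mul_le_mul_of_nonneg_left s2 hβ.1
  have t3 : β * (1 - w) ≤ 1 * (1 - w) :=
    mul_le_mul_of_nonneg_right hβ.2 (by linarith [hw01.2])
  nlinarith [t1, t2, t3, hz01.1]

end KeyIneq
section Sums

lemma qProb_nonneg {k : ℕ} (u : Fin k → ℝ) (hu : ∀ i, u i ∈ Set.Icc (0:ℝ) 1)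
    (l : Fin k → Bool) : 0 ≤ qProb u l := by
  apply Finset.prod_nonneg
  intro i _
  split_ifs
  · exact (hu i).1
  · linarith [(hu i).2]

lemma qProb_cons_true {k : ℕ} (u : Fin (k+1) → ℝ) (l' : Fin k → Bool) :
    qProb u (Fin.cons true l') = u 0 * qProb (fun i => u i.succ) l' := by
  simp only [qProb, Fin.prod_univ_succ, Fin.cons_zero, Fin.cons_succ, if_true]

lemma qProb_cons_false {k : ℕ} (u : Fin (k+1) → ℝ) (l' : Fin k → Bool) :
    qProb u (Fin.cons false l') = (1 - u 0) * qProb (fun i => u i.succ) l' := by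
  simp only [qProb, Fin.prod_univ_succ, Fin.cons_zero, Fin.cons_succ]
  norm_num

lemma qProb_snoc_true {k : ℕ} (u : Fin (k+1) → ℝ) (l' : Fin k → Bool) :
    qProb u (Fin.snoc l' true) =
      u (Fin.last k) * qProb (fun i => u i.castSucc) l' := by
  simp only [qProb, Fin.prod_univ_castSucc, Fin.snoc_castSucc, Fin.snoc_last, if_true]
  ring

lemma qProb_snoc_false {k : ℕ} (u : Fin (k+1) → ℝ) (l' : Fin k → Bool) :
    qProb u (Fin.snoc l' false) =
      (1 - u (Fin.last k)) * qProb (fun i => u i.castSucc) l' := by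
  simp only [qProb, Fin.prod_univ_castSucc, Fin.snoc_castSucc, Fin.snoc_last]
  norm_num
  ring

lemma countTrue_sum {k : ℕ} (l : Fin k → Bool) :
    countTrue l = ∑ i : Fin k, (if l i then 1 else 0) := by
  simp only [countTrue]
  exact Finset.card_filter _ _

lemma countTrue_le {k : ℕ} (l : Fin k → Bool) : countTrue l ≤ k := by
  simpa [countTrue] using Finset.card_filter_le (Finset.univ : Finset (Fin k)) (fun i => l i = true)

lemma countTrue_cons_true {k : ℕ} (l' : Fin k → Bool) :
    countTrue (Fin.cons true l') = countTrue l' + 1 := by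
  rw [countTrue_sum, countTrue_sum, Fin.sum_univ_succ]
  simp only [Fin.cons_zero, Fin.cons_succ, if_true]
  omega

lemma countTrue_cons_false {k : ℕ} (l' : Fin k → Bool) :
    countTrue (Fin.cons false l') = countTrue l' := by
  rw [countTrue_sum, countTrue_sum, Fin.sum_univ_succ]
  simp only [Fin.cons_zero, Fin.cons_succ]
  norm_num

lemma countTrue_snoc_true {k : ℕ} (l' : Fin k → Bool) :
    countTrue (Fin.snoc l' true) = countTrue l' + 1 := by
  rw [countTrue_sum, countTrue_sum, Fin.sum_univ_castSucc]
  simp only [Fin.snoc_castSucc, Fin.snoc_last, if_true]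

lemma countTrue_snoc_false {k : ℕ} (l' : Fin k → Bool) :
    countTrue (Fin.snoc l' false) = countTrue l' := by
  rw [countTrue_sum, countTrue_sum, Fin.sum_univ_castSucc]
  simp only [Fin.snoc_castSucc, Fin.snoc_last]
  norm_num

lemma qProb_sum_one : ∀ (k : ℕ) (u : Fin k → ℝ), ∑ l : Fin k → Bool, qProb u l = 1 := by
  intro k
  induction k with
  | zero =>
    intro u
    have h1 : ∀ l : Fin 0 → Bool, qProb u l = 1 := fun l => by
      simp [qProb]
    rw [Finset.sum_congr rfl (fun l _ => h1 l)]
    simp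
  | succ k ih =>
    intro u
    rw [← Fintype.sum_equiv (Fin.consEquiv (fun _ : Fin (k+1) => Bool))
      (fun p => qProb u (Fin.cons p.1 p.2)) (fun l => qProb u l) (fun p => rfl),
      Fintype.sum_prod_type, Fintype.sum_bool]
    simp only [qProb_cons_true, qProb_cons_false, ← Finset.sum_add_distrib]
    have : ∀ l' : Fin k → Bool,
        u 0 * qProb (fun i => u i.succ) l' + (1 - u 0) * qProb (fun i => u i.succ) l'
          = qProb (fun i => u i.succ) l' := fun l' => by ring
    rw [Finset.sum_congr rfl (fun l' _ => this l'), ih]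

lemma lin_sum {n : ℕ} (N : ℕ) (hN : N < n) (ω : Fin n → ℝ) :
    ∑ i : Fin n, (if N ≤ i.val then ω i else 0)
      = ω ⟨N, hN⟩ + ∑ i : Fin n, (if N + 1 ≤ i.val then ω i else 0) := by
  have h : ∀ i : Fin n, (if N ≤ i.val then ω i else 0)
      = (if i = ⟨N, hN⟩ then ω i else 0) + (if N + 1 ≤ i.val then ω i else 0) := by
    intro i
    by_cases hi : i = (⟨N, hN⟩ : Fin n)
    · subst hi
      rw [if_pos rfl, if_pos (le_refl _), if_neg (by simp only [Fin.val_mk]; omega)]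
      ring
    · have hvi : i.val ≠ N := fun h => hi (Fin.ext h)
      rw [if_neg hi]
      rcases Nat.lt_or_ge i.val N with h2 | h2
      · rw [if_neg (by omega), if_neg (by omega)]; ring
      · rw [if_pos (by omega), if_pos (by omega)]; ring
  rw [Finset.sum_congr rfl (fun i _ => h i), Finset.sum_add_distrib,
    Finset.sum_ite_eq' Finset.univ (⟨N, hN⟩ : Fin n) ω]
  simp

lemma lin_sum_cyc {n : ℕ} (hn : 0 < n) (N : ℕ) (hN : N < n) (ω : Fin n → ℝ) :
    ∑ i : Fin n, (if N ≤ i.val then cyc hn ω i else 0)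
      = ω ⟨0, hn⟩ + ∑ i : Fin n, (if N + 1 ≤ i.val then ω i else 0) := by
  set ω' : ℕ → ℝ := fun t => if h : t < n then ω ⟨t, h⟩ else 0 with hω'
  set F : ℕ → ℝ := fun t => if N ≤ t then (if t + 1 = n then ω' 0 else ω' (t+1)) else 0 with hF
  set H : ℕ → ℝ := fun t => if N + 1 ≤ t then ω' t else 0 with hH
  have step1 : ∑ i : Fin n, (if N ≤ i.val then cyc hn ω i else 0)
      = ∑ t ∈ Finset.range n, F t := by
    rw [← Fin.sum_univ_eq_sum_range F n]
    apply Finset.sum_congr rfl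
    intro i _
    rw [hF]
    dsimp only
    by_cases h1 : N ≤ i.val
    · rw [if_pos h1, if_pos h1]
      by_cases h2 : i.val + 1 = n
      · rw [if_pos h2, hω', cyc]
        dsimp only
        rw [dif_pos hn]
        congr 1
        exact Fin.ext (by simp only [Fin.val_mk]; rw [h2]; exact Nat.mod_self n)
      · rw [if_neg h2, hω', cyc]
        dsimp only
        rw [dif_pos (by omega : i.val + 1 < n)]
        congr 1
        exact Fin.ext (by simp only [Fin.val_mk]; exact Nat.mod_eq_of_lt (by omega))
    · rw [if_neg h1, if_neg h1]
  have step3 : ∑ i : Fin n, (if N + 1 ≤ i.val then ω i else 0)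
      = ∑ t ∈ Finset.range n, H t := by
    rw [← Fin.sum_univ_eq_sum_range H n]
    apply Finset.sum_congr rfl
    intro i _
    rw [hH]
    dsimp only
    by_cases h1 : N + 1 ≤ i.val
    · rw [if_pos h1, if_pos h1, hω']
      dsimp only
      rw [dif_pos i.isLt]
    · rw [if_neg h1, if_neg h1]
  obtain ⟨n', rfl⟩ : ∃ n', n = n' + 1 := ⟨n - 1, by omega⟩
  have step2 : ∑ t ∈ Finset.range (n'+1), F t = ω' 0 + ∑ t ∈ Finset.range (n'+1), H t := by
    rw [Finset.sum_range_succ F n', Finset.sum_range_succ' H n']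
    have hF' : F n' = ω' 0 := by
      rw [hF]; dsimp only
      rw [if_pos (by omega), if_pos (by omega)]
    have hH0 : H 0 = 0 := by
      rw [hH]; dsimp only
      rw [if_neg (by omega)]
    have hFH : ∀ t ∈ Finset.range n', F t = H (t+1) := by
      intro t ht
      have htn : t < n' := Finset.mem_range.1 ht
      rw [hF, hH]; dsimp only
      by_cases h1 : N ≤ t
      · rw [if_pos h1, if_neg (by omega), if_pos (by omega)]
      · rw [if_neg h1, if_neg (by omega)]
    rw [Finset.sum_congr rfl hFH, hF', hH0]
    ring
  rw [step1, step3, step2]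
  congr 1

end Sums

end AuxZ
end AuxZ

/-- induction step for inequality (A) of Lemma 3.  If `g` is
affine in each coordinate and satisfies (A) and (B), then the one-step backward
recursion `f` satisfies (A):
`1 + f(ω_2,…,ω_n,ω_1) ≥ f(ω_1,…,ω_n)` for all sorted `ω ∈ [0,1]^n`. -/
theorem induction_step_A
    (n k : ℕ) (hk1 : 1 ≤ k) (hkn : k ≤ n)
    (p01 p11 β : ℝ)
    (hp01 : p01 ∈ Set.Icc (0:ℝ) 1) (hp11 : p11 ∈ Set.Icc (0:ℝ) 1)
    (hβ : β ∈ Set.Icc (0:ℝ) 1) (hord : p01 ≤ p11)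
    (g : (Fin n → ℝ) → ℝ)
    (haffine : ∀ ω : Fin n → ℝ, (∀ j, ω j ∈ Set.Icc (0:ℝ) 1) → ∀ i : Fin n,
      ∀ x ∈ Set.Icc (0:ℝ) 1,
        g (Function.update ω i x) =
          (1 - x) * g (Function.update ω i 0) + x * g (Function.update ω i 1))
    (hA : ∀ ω : Fin n → ℝ, Monotone ω → (∀ i, ω i ∈ Set.Icc (0:ℝ) 1) →
      1 + g (cyc (by omega) ω) ≥ g ω)
    (hB : ∀ ω : Fin n → ℝ, Monotone ω → (∀ i, ω i ∈ Set.Icc (0:ℝ) 1) →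
      ∀ (j : ℕ) (hj : j + 1 < n), ∀ x y : ℝ,
        x ∈ Set.Icc (0:ℝ) 1 → y ∈ Set.Icc (0:ℝ) 1 → y ≤ x →
          g (upd2 ω j hj y x) ≥ g (upd2 ω j hj x y))
    (f : (Fin n → ℝ) → ℝ)
    (hf : ∀ ω : Fin n → ℝ,
      f ω = (∑ i : Fin n, if n - k ≤ i.val then ω i else 0) +
        β * ∑ l : Fin k → Bool,
          qProb (topCoords hkn ω) l * g (vl k p01 p11 ω (countTrue l))) :
    ∀ ω : Fin n → ℝ, Monotone ω → (∀ i, ω i ∈ Set.Icc (0:ℝ) 1) →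
      1 + f (cyc (by omega) ω) ≥ f ω := by
  intro ω hmono hω01
  have hn : 0 < n := by omega
  obtain ⟨k', rfl⟩ : ∃ k', k = k' + 1 := ⟨k - 1, by omega⟩
  rw [hf, hf]
  have hNn : n - (k'+1) < n := by omega
  rw [AuxZ.lin_sum (n - (k'+1)) hNn ω, AuxZ.lin_sum_cyc hn (n - (k'+1)) hNn ω]
  -- weight functions agree
  have huu : (fun i : Fin k' => topCoords hkn (cyc hn ω) i.castSucc)
      = (fun i : Fin k' => topCoords hkn ω i.succ) := by
    funext i
    simp only [topCoords]
    rw [AuxZ.cyc_at hn ω _ (by simp only [Fin.val_mk, Fin.coe_castSucc]; omega)]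
    congr 1
  have hlast : topCoords hkn (cyc hn ω) (Fin.last k') = ω ⟨0, hn⟩ := by
    simp only [topCoords, cyc]
    congr 1
    refine Fin.ext ?_
    simp only [Fin.val_mk, Fin.val_last]
    rw [show n - (k'+1) + k' + 1 = n by omega]
    exact Nat.mod_self n
  have hzero : topCoords hkn ω 0 = ω ⟨n - (k'+1), by omega⟩ := by
    simp [topCoords]
  -- split the first coordinate of the sum for f ω
  have hsum1 :
      (∑ l : Fin (k'+1) → Bool,
          qProb (topCoords hkn ω) l * g (vl (k'+1) p01 p11 ω (countTrue l)))
        = ∑ l' : Fin k' → Bool, qProb (fun i => topCoords hkn ω i.succ) l' *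
            (ω ⟨n - (k'+1), by omega⟩ * g (vl (k'+1) p01 p11 ω (countTrue l' + 1)) +
              (1 - ω ⟨n - (k'+1), by omega⟩) * g (vl (k'+1) p01 p11 ω (countTrue l'))) := by
    rw [← Fintype.sum_equiv (Fin.consEquiv (fun _ : Fin (k'+1) => Bool))
        (fun p => qProb (topCoords hkn ω) (Fin.cons p.1 p.2) *
          g (vl (k'+1) p01 p11 ω (countTrue (Fin.cons p.1 p.2))))
        (fun l => qProb (topCoords hkn ω) l * g (vl (k'+1) p01 p11 ω (countTrue l)))
        (fun p => rfl),
      Fintype.sum_prod_type, Fintype.sum_bool, ← Finset.sum_add_distrib]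
    apply Finset.sum_congr rfl
    intro l' _
    rw [AuxZ.qProb_cons_true, AuxZ.qProb_cons_false, AuxZ.countTrue_cons_true,
      AuxZ.countTrue_cons_false, hzero]
    ring
  -- split the last coordinate of the sum for f (cyc ω)
  have hsum2 :
      (∑ l : Fin (k'+1) → Bool,
          qProb (topCoords hkn (cyc hn ω)) l *
            g (vl (k'+1) p01 p11 (cyc hn ω) (countTrue l)))
        = ∑ l' : Fin k' → Bool, qProb (fun i => topCoords hkn ω i.succ) l' *
            (ω ⟨0, hn⟩ * g (vl (k'+1) p01 p11 (cyc hn ω) (countTrue l' + 1)) +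
              (1 - ω ⟨0, hn⟩) * g (vl (k'+1) p01 p11 (cyc hn ω) (countTrue l'))) := by
    rw [← Fintype.sum_equiv (Fin.snocEquiv (fun _ : Fin (k'+1) => Bool))
        (fun p => qProb (topCoords hkn (cyc hn ω)) (Fin.snoc p.2 p.1) *
          g (vl (k'+1) p01 p11 (cyc hn ω) (countTrue (Fin.snoc p.2 p.1))))
        (fun l => qProb (topCoords hkn (cyc hn ω)) l *
          g (vl (k'+1) p01 p11 (cyc hn ω) (countTrue l)))
        (fun p => rfl),
      Fintype.sum_prod_type, Fintype.sum_bool, ← Finset.sum_add_distrib]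
    apply Finset.sum_congr rfl
    intro l' _
    rw [AuxZ.qProb_snoc_true, AuxZ.qProb_snoc_false, AuxZ.countTrue_snoc_true,
      AuxZ.countTrue_snoc_false, hlast, huu]
    ring
  rw [hsum1, hsum2]
  -- conclude via the per-realization inequality
  set q : (Fin k' → Bool) → ℝ := qProb (fun i => topCoords hkn ω i.succ) with hq
  have hq0 : ∀ l', 0 ≤ q l' := fun l' =>
    AuxZ.qProb_nonneg _ (fun i => hω01 _) l'
  have hq1 : ∑ l' : Fin k' → Bool, q l' = 1 := AuxZ.qProb_sum_one k' _
  have key : ∀ l' ∈ (Finset.univ : Finset (Fin k' → Bool)),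
      q l' * (ω ⟨n - (k'+1), by omega⟩ +
        β * (ω ⟨n - (k'+1), by omega⟩ * g (vl (k'+1) p01 p11 ω (countTrue l' + 1)) +
          (1 - ω ⟨n - (k'+1), by omega⟩) * g (vl (k'+1) p01 p11 ω (countTrue l'))))
      ≤ q l' * (1 + ω ⟨0, hn⟩ +
        β * (ω ⟨0, hn⟩ * g (vl (k'+1) p01 p11 (cyc hn ω) (countTrue l' + 1)) +
          (1 - ω ⟨0, hn⟩) * g (vl (k'+1) p01 p11 (cyc hn ω) (countTrue l')))) := by
    intro l' _
    refine mul_le_mul_of_nonneg_left ?_ (hq0 l')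
    exact AuxZ.key_ineq g hn (k'+1) (countTrue l') hk1 hkn
      (by have := AuxZ.countTrue_le l'; omega) p01 p11 β hp01 hp11 hβ hord
      haffine hA hB ω hmono hω01
  have S := Finset.sum_le_sum key
  have expand : ∀ (c : ℝ) (E : (Fin k' → Bool) → ℝ),
      ∑ l' : Fin k' → Bool, q l' * (c + β * E l')
        = c * (∑ l' : Fin k' → Bool, q l') + β * ∑ l' : Fin k' → Bool, q l' * E l' := by
    intro c E
    rw [Finset.mul_sum, Finset.mul_sum, ← Finset.sum_add_distrib]
    apply Finset.sum_congr rfl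
    intro x _
    ring
  rw [expand, expand, hq1] at S
  linarith [S]
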